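/- A nonempty string X has more than one position j ∈ [1,|X|] at which a lexicographically minimal rotation of X starts if and only if X is a power of some string, i.e., X = U^m for some string U and some integer m ≥ 2. -/

import Mathlib

open scoped Classical

variable {α : Type*} [LinearOrder α]

/-- The rotation of `W` starting at the 1-based position `j`. -/
def rot (W : List α) (j : ℕ) : List α := W.drop (j - 1) ++ W.take (j - 1)

/-- The fragment `T[i..i+ℓ-1]` (1-based position `i`, length `ℓ`). -/
def frag (T : List α) (i ℓ : ℕ) : List α := (T.drop (i - 1)).take ℓ

/-- The `m`-fold concatenation `U^m`. -/
def listPow (U : List α) (m : ℕ) : List α := (List.replicate m U).flatten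

/-- A nonempty string is primitive if it is not a power `U^m` with `m ≥ 2`. -/
def Primitive (X : List α) : Prop :=
  X ≠ [] ∧ ∀ (U : List α) (m : ℕ), 2 ≤ m → X ≠ listPow U m

/-- `j ∈ [1,|X|]` is a position at which a lexicographically minimal rotation of `X` starts. -/
def IsMinRotPos (X : List α) (j : ℕ) : Prop :=
  j ∈ Finset.Icc 1 X.length ∧ ∀ k ∈ Finset.Icc 1 X.length, rot X j ≤ rot X k

/-- `j` is the bd-anchor of `X`: the smallest position of a lexicographically minimal rotation. -/
def IsBdAnchor (X : List α) (j : ℕ) : Prop :=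
  IsMinRotPos X j ∧ ∀ k, IsMinRotPos X k → j ≤ k

/-- The set `A_ℓ(T)` of order-`ℓ` bd-anchors of `T` (1-based absolute positions). -/
def bdAnchors (ℓ : ℕ) (T : List α) : Set ℕ :=
  { p | ∃ i ∈ Finset.Icc 1 (T.length - ℓ + 1), ∃ j, IsBdAnchor (frag T i ℓ) j ∧ p = i - 1 + j }


lemma listPow_add (U : List α) (p q : ℕ) :
    listPow U (p + q) = listPow U p ++ listPow U q := by
  unfold listPow
  rw [List.replicate_add, List.flatten_append]

lemma listPow_one (U : List α) : listPow U 1 = U := by simp [listPow]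

lemma listPow_length (U : List α) (m : ℕ) : (listPow U m).length = m * U.length := by
  simp [listPow, mul_comm]

lemma comm_listPow : ∀ N : ℕ, ∀ A B : List α, A.length + B.length ≤ N → A ++ B = B ++ A →
    ∃ (U : List α) (p q : ℕ), A = listPow U p ∧ B = listPow U q := by
  intro N
  induction N with
  | zero =>
    intro A B hlen _
    have hA : A = [] := List.length_eq_zero_iff.mp (by omega)
    have hB : B = [] := List.length_eq_zero_iff.mp (by omega)
    exact ⟨[], 0, 0, by simp [hA, listPow], by simp [hB, listPow]⟩
  | succ N ih =>
    intro A B hlen h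
    rcases le_total A.length B.length with hab | hab
    · rcases eq_or_ne A [] with rfl | hA
      · exact ⟨B, 0, 1, by simp [listPow], (listPow_one B).symm⟩
      · obtain ⟨C, rfl⟩ : ∃ C, B = A ++ C := by
          refine ⟨B.drop A.length, ?_⟩
          have h1 : (A ++ B).take A.length = A := List.take_left
          rw [h, List.take_append_of_le_length hab] at h1
          conv_lhs => rw [← List.take_append_drop A.length B, h1]
        have h2 : A ++ C = C ++ A := by
          apply List.append_cancel_left (as := A)
          simpa [List.append_assoc] using h
        have hlen2 : A.length + C.length ≤ N := by
          have : 1 ≤ A.length := List.length_pos_iff.mpr hA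
          simp only [List.length_append] at hlen; omega
        obtain ⟨U, p, q, hA', hC'⟩ := ih A C hlen2 h2
        exact ⟨U, p, p + q, hA', by rw [listPow_add, ← hA', ← hC']⟩
    · rcases eq_or_ne B [] with rfl | hB
      · exact ⟨A, 1, 0, (listPow_one A).symm, by simp [listPow]⟩
      · obtain ⟨D, rfl⟩ : ∃ D, A = B ++ D := by
          refine ⟨A.drop B.length, ?_⟩
          have h1 : (B ++ A).take B.length = B := List.take_left
          rw [← h, List.take_append_of_le_length hab] at h1
          conv_lhs => rw [← List.take_append_drop B.length A, h1]
        have h2 : B ++ D = D ++ B := by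
          apply List.append_cancel_left (as := B)
          simpa [List.append_assoc] using h.symm
        have hlen2 : B.length + D.length ≤ N := by
          have : 1 ≤ B.length := List.length_pos_iff.mpr hB
          simp only [List.length_append] at hlen; omega
        obtain ⟨U, p, q, hB', hD'⟩ := ih B D hlen2 h2
        exact ⟨U, p + q, p, by rw [listPow_add, ← hB', ← hD'], hB'⟩

lemma rotate_eq_self_pow {X : List α} {r : ℕ} (hr : 0 < r) (hrn : r < X.length)
    (h : X.rotate r = X) : ∃ (U : List α) (m : ℕ), 2 ≤ m ∧ X = listPow U m := by
  have hre : X.drop r ++ X.take r = X.take r ++ X.drop r := by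
    rw [← List.rotate_eq_drop_append_take hrn.le, h]
    exact (List.take_append_drop r X).symm
  obtain ⟨U, p, q, hB, hA⟩ := comm_listPow (X.length + X.length) (X.drop r) (X.take r)
    (by simp only [List.length_drop, List.length_take]; omega) hre
  have hlp : (X.drop r).length = p * U.length := by rw [hB, listPow_length]
  have hlq : (X.take r).length = q * U.length := by rw [hA, listPow_length]
  simp only [List.length_drop, List.length_take] at hlp hlq
  have hp : 1 ≤ p := by rcases Nat.eq_zero_or_pos p with rfl | h; · omega
                        · exact h
  have hq : 1 ≤ q := by rcases Nat.eq_zero_or_pos q with rfl | h; · omega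
                        · exact h
  refine ⟨U, q + p, by omega, ?_⟩
  rw [listPow_add, ← hA, ← hB, List.take_append_drop]

lemma rot_eq_rotate {X : List α} {j : ℕ} (hj : j ≤ X.length) :
    rot X j = X.rotate (j - 1) := by
  rw [List.rotate_eq_drop_append_take (by omega)]; rfl

/-- A nonempty string `X` has more than one position `j ∈ [1,|X|]` at which a
lexicographically minimal rotation of `X` starts iff `X` is a power `U^m` with `m ≥ 2`. -/
theorem more_than_one_min_rotation_iff_power (X : List α) (hX : X ≠ []) :
    (∃ j k, j ≠ k ∧ IsMinRotPos X j ∧ IsMinRotPos X k) ↔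
      ∃ (U : List α) (m : ℕ), 2 ≤ m ∧ X = listPow U m := by
  have hn : 1 ≤ X.length := List.length_pos_iff.mpr hX
  constructor
  · rintro ⟨j, k, hjk, hj, hk⟩
    have hEq : rot X j = rot X k := le_antisymm (hj.2 k hk.1) (hk.2 j hj.1)
    obtain ⟨hj1, hj2⟩ := Finset.mem_Icc.mp hj.1
    obtain ⟨hk1, hk2⟩ := Finset.mem_Icc.mp hk.1
    have key : ∀ a b : ℕ, 1 ≤ a → a < b → b ≤ X.length → rot X a = rot X b →
        ∃ (U : List α) (m : ℕ), 2 ≤ m ∧ X = listPow U m := by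
      intro a b ha hab hb hE
      rw [rot_eq_rotate (by omega), rot_eq_rotate hb] at hE
      have h3 : X.rotate (X.length - (b - a)) = X := by
        have h4 := congrArg (fun l => List.rotate l (X.length - (b - 1))) hE
        simp only [List.rotate_rotate] at h4
        have e1 : a - 1 + (X.length - (b - 1)) = X.length - (b - a) := by omega
        have e2 : b - 1 + (X.length - (b - 1)) = X.length := by omega
        rw [e1, e2, List.rotate_length] at h4
        exact h4
      exact rotate_eq_self_pow (by omega) (by omega) h3
    rcases lt_trichotomy j k with h | h | h
    · exact key j k hj1 h hk2 hEq
    · exact absurd h hjk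
    · exact key k j hk1 h hj2 hEq.symm
  · rintro ⟨U, m, hm, hXU⟩
    have hU : U ≠ [] := by
      rintro rfl; apply hX; rw [hXU]; simp [listPow]
    have hu : 1 ≤ U.length := List.length_pos_iff.mpr hU
    have hlen : X.length = m * U.length := by rw [hXU, listPow_length]
    have h2u : 2 * U.length ≤ X.length := by
      rw [hlen]; exact mul_le_mul_left hm U.length
    have hrot : X.rotate U.length = X := by
      rw [List.rotate_eq_drop_append_take (by omega : U.length ≤ X.length)]
      have hsplit : X = U ++ listPow U (m - 1) := by
        rw [hXU]
        conv_lhs => rw [show m = 1 + (m - 1) by omega]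
        rw [listPow_add, listPow_one]
      rw [hsplit, List.drop_left, List.take_left]
      have key : listPow U (m - 1) ++ listPow U 1 = listPow U 1 ++ listPow U (m - 1) := by
        rw [← listPow_add, ← listPow_add]; congr 1; omega
      simpa [listPow_one] using key
    obtain ⟨j, hjmem, hjmin⟩ := Finset.exists_min_image (Finset.Icc 1 X.length) (rot X)
      ⟨1, Finset.mem_Icc.mpr ⟨le_refl 1, hn⟩⟩
    obtain ⟨hj1, hj2⟩ := Finset.mem_Icc.mp hjmem
    have hminJ : IsMinRotPos X j := ⟨hjmem, hjmin⟩
    by_cases hcase : j + U.length ≤ X.length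
    · refine ⟨j, j + U.length, by omega, hminJ, ?_⟩
      have hmem' : j + U.length ∈ Finset.Icc 1 X.length := Finset.mem_Icc.mpr ⟨by omega, hcase⟩
      have heq : rot X (j + U.length) = rot X j := by
        rw [rot_eq_rotate hcase, rot_eq_rotate hj2]
        conv_rhs => rw [← hrot]
        rw [List.rotate_rotate]
        congr 1; omega
      exact ⟨hmem', fun k hk => by rw [heq]; exact hjmin k hk⟩
    · have hju : U.length < j := by omega
      refine ⟨j, j - U.length, by omega, hminJ, ?_⟩
      have hmem' : j - U.length ∈ Finset.Icc 1 X.length :=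
        Finset.mem_Icc.mpr ⟨by omega, by omega⟩
      have heq : rot X (j - U.length) = rot X j := by
        rw [rot_eq_rotate (by omega), rot_eq_rotate hj2]
        conv_lhs => rw [← hrot]
        rw [List.rotate_rotate]
        congr 1; omega
      exact ⟨hmem', fun k hk => by rw [heq]; exact hjmin k hk⟩
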